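/- arXiv:1602.03323 — 3 statements merged into one kernel-verified Lean document; each statement's English description precedes it below -/
import Mathlib

section
/- If a general Dirichlet series ∑_{n=1}^∞ a_n e^{-λ_n s} (with (λ_n) strictly increasing, nonnegative, unbounded) converges at a point s₀ ∈ ℂ, then for every δ ∈ (0, π/2) it converges uniformly on the angular region {s ∈ ℂ : |arg(s - s₀)| ≤ π/2 - δ}. -/
open Complex Filter Set
open scoped Real Topology

private lemma real_exp_int {c : ℝ} (hc : c ≠ 0) (u v : ℝ) :
    ∫ x in u..v, Real.exp (c * x) = (Real.exp (c * v) - Real.exp (c * u)) / c := by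
  have D : ∀ x : ℝ, HasDerivAt (fun y : ℝ => Real.exp (c * y) / c) (Real.exp (c * x)) x := by
    intro x
    have h1 : HasDerivAt (fun y : ℝ => Real.exp (c * y)) (Real.exp (c * x) * c) x := by
      simpa using ((hasDerivAt_id x).const_mul c).exp
    simpa [mul_div_cancel_right₀ _ hc] using h1.div_const c
  rw [intervalIntegral.integral_deriv_eq_sub' _ (funext fun x => (D x).deriv)
      (fun x _ => (D x).differentiableAt)
      ((Real.continuous_exp.comp (continuous_const.mul continuous_id)).continuousOn)]
  ring

private lemma exp_diff_bound {z : ℂ} (hz : 0 < z.re) {u v : ℝ} (huv : u ≤ v) :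
    ‖Complex.exp (-(u : ℂ) * z) - Complex.exp (-(v : ℂ) * z)‖ ≤
      (‖z‖ / z.re) * (Real.exp (-(z.re * u)) - Real.exp (-(z.re * v))) := by
  have hz0 : z ≠ 0 := fun h => by simp [h] at hz
  have hnz : (-z) ≠ 0 := neg_ne_zero.mpr hz0
  have hre : z.re ≠ 0 := ne_of_gt hz
  have key : Complex.exp (-(u : ℂ) * z) - Complex.exp (-(v : ℂ) * z)
      = z * ∫ x in u..v, Complex.exp (-z * x) := by
    rw [integral_exp_mul_complex hnz]
    field_simp
    ring_nf
  rw [key, norm_mul]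
  have h1 : ‖∫ x in u..v, Complex.exp (-z * x)‖ ≤
      ∫ x in u..v, ‖Complex.exp (-z * x)‖ :=
    intervalIntegral.norm_integral_le_integral_norm huv
  have h2 : (fun x : ℝ => ‖Complex.exp (-z * x)‖) = fun x : ℝ => Real.exp (-z.re * x) := by
    funext x
    rw [Complex.norm_exp]
    norm_num
  have h3 : ∫ x in u..v, ‖Complex.exp (-z * x)‖
      = (Real.exp (-(z.re * u)) - Real.exp (-(z.re * v))) / z.re := by
    rw [h2, real_exp_int (neg_ne_zero.mpr hre) u v]
    rw [div_eq_div_iff (neg_ne_zero.mpr hre) hre]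
    ring
  calc ‖z‖ * ‖∫ x in u..v, Complex.exp (-z * x)‖
      ≤ ‖z‖ * ∫ x in u..v, ‖Complex.exp (-z * x)‖ :=
        mul_le_mul_of_nonneg_left h1 (norm_nonneg _)
    _ = (‖z‖ / z.re) * (Real.exp (-(z.re * u)) - Real.exp (-(z.re * v))) := by
        rw [h3]; ring

/-- Abel summation identity tailored for our use. -/
private lemma abel_identity (b : ℕ → ℂ) (e : ℕ → ℂ) {M m : ℕ} (hMm : M ≤ m) :
    ∑ n ∈ Finset.Ico M m, b n * e n
      = (∑ k ∈ Finset.Ico M m, b k) * e m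
        + ∑ n ∈ Finset.Ico M m, (∑ k ∈ Finset.Ico M (n + 1), b k) * (e n - e (n + 1)) := by
  induction m, hMm using Nat.le_induction with
  | base => simp
  | succ m hMm ih =>
    simp only [Finset.sum_Ico_succ_top hMm]
    rw [ih]
    ring

private lemma telescope_exp (f : ℕ → ℝ) {M m : ℕ} (hMm : M ≤ m) :
    ∑ n ∈ Finset.Ico M m, (f n - f (n + 1)) = f M - f m := by
  induction m, hMm using Nat.le_induction with
  | base => simp
  | succ m hMm ih => rw [Finset.sum_Ico_succ_top hMm, ih]; ring

private lemma abel_bound (b : ℕ → ℂ) (lam : ℕ → ℝ) (hmono : Monotone lam)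
    (hnonneg : ∀ n, 0 ≤ lam n) {z : ℂ} (hz : 0 < z.re) {C : ℝ}
    (hCz : ‖z‖ ≤ C * z.re) {ε : ℝ} (hε : 0 ≤ ε) {M m : ℕ} (hMm : M ≤ m)
    (hT : ∀ n, M ≤ n → n ≤ m → ‖∑ k ∈ Finset.Ico M n, b k‖ ≤ ε) :
    ‖∑ n ∈ Finset.Ico M m, b n * Complex.exp (-(lam n : ℂ) * z)‖ ≤ (1 + C) * ε := by
  have hC0 : 0 ≤ C := by
    have := (norm_nonneg z).trans hCz
    nlinarith
  set e : ℕ → ℂ := fun n => Complex.exp (-(lam n : ℂ) * z) with he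
  set f : ℕ → ℝ := fun n => Real.exp (-(z.re * lam n)) with hf
  have hef : ∀ n, ‖e n‖ = f n := by
    intro n
    rw [he, hf]
    simp only [Complex.norm_exp]
    congr 1
    simp [mul_comm]
  have hf1 : ∀ n, f n ≤ 1 := by
    intro n
    rw [hf]
    apply Real.exp_le_one_iff.mpr
    simp only [neg_nonpos]
    exact mul_nonneg hz.le (hnonneg n)
  have hf0 : ∀ n, 0 < f n := fun n => Real.exp_pos _
  rw [abel_identity b e hMm]
  have K : ℝ := ‖z‖ / z.re
  have hKC : ‖z‖ / z.re ≤ C := (div_le_iff₀ hz).mpr hCz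
  have hK0 : 0 ≤ ‖z‖ / z.re := div_nonneg (norm_nonneg z) hz.le
  have step1 : ‖(∑ k ∈ Finset.Ico M m, b k) * e m‖ ≤ ε := by
    rw [norm_mul, hef]
    calc ‖∑ k ∈ Finset.Ico M m, b k‖ * f m ≤ ε * 1 :=
          mul_le_mul (hT m hMm le_rfl) (hf1 m) (hf0 m).le hε
      _ = ε := mul_one ε
  have step2 : ‖∑ n ∈ Finset.Ico M m, (∑ k ∈ Finset.Ico M (n + 1), b k) * (e n - e (n + 1))‖
      ≤ C * ε := by
    calc ‖∑ n ∈ Finset.Ico M m, (∑ k ∈ Finset.Ico M (n + 1), b k) * (e n - e (n + 1))‖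
        ≤ ∑ n ∈ Finset.Ico M m, ‖(∑ k ∈ Finset.Ico M (n + 1), b k) * (e n - e (n + 1))‖ :=
          norm_sum_le _ _
      _ ≤ ∑ n ∈ Finset.Ico M m, ε * ((‖z‖ / z.re) * (f n - f (n + 1))) := by
          apply Finset.sum_le_sum
          intro n hn
          rw [Finset.mem_Ico] at hn
          rw [norm_mul]
          have hb : ‖∑ k ∈ Finset.Ico M (n + 1), b k‖ ≤ ε := hT (n + 1) (by omega) (by omega)
          have hd : ‖e n - e (n + 1)‖ ≤ (‖z‖ / z.re) * (f n - f (n + 1)) :=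
            exp_diff_bound hz (hmono (Nat.le_succ n))
          exact mul_le_mul hb hd (norm_nonneg _) hε
      _ = ε * ((‖z‖ / z.re) * (f M - f m)) := by
          rw [← Finset.mul_sum, ← Finset.mul_sum, telescope_exp f hMm]
      _ ≤ C * ε := by
          have hfMm : f M - f m ≤ 1 := by linarith [hf1 M, hf0 m]
          have hfMm0 : 0 ≤ f M - f m := by
            have : f m ≤ f M := by
              rw [hf]
              apply Real.exp_le_exp.mpr
              have := hmono hMm
              nlinarith
            linarith
          have h4 : ‖z‖ / z.re * (f M - f m) ≤ C := by nlinarith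
          calc ε * (‖z‖ / z.re * (f M - f m)) ≤ ε * C :=
                mul_le_mul_of_nonneg_left h4 hε
            _ = C * ε := mul_comm _ _
  calc ‖(∑ k ∈ Finset.Ico M m, b k) * e m
        + ∑ n ∈ Finset.Ico M m, (∑ k ∈ Finset.Ico M (n + 1), b k) * (e n - e (n + 1))‖
      ≤ ‖(∑ k ∈ Finset.Ico M m, b k) * e m‖
        + ‖∑ n ∈ Finset.Ico M m, (∑ k ∈ Finset.Ico M (n + 1), b k) * (e n - e (n + 1))‖ :=
        norm_add_le _ _
    _ ≤ ε + C * ε := add_le_add step1 step2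
    _ = (1 + C) * ε := by ring

/-- If a general Dirichlet series converges at `s₀`, then for every `δ ∈ (0, π/2)` it
converges uniformly on the angular region `{s : |arg (s - s₀)| ≤ π/2 - δ}`. -/
theorem stmt_0 (lam : ℕ → ℝ) (hmono : StrictMono lam) (hnonneg : ∀ n, 0 ≤ lam n)
    (hunb : Tendsto lam atTop atTop) (a : ℕ → ℂ) (s₀ : ℂ) (L : ℂ)
    (hconv : Tendsto (fun m => ∑ n ∈ Finset.range m, a n * Complex.exp (-(lam n : ℂ) * s₀))
      atTop (𝓝 L))
    (δ : ℝ) (hδ : δ ∈ Set.Ioo 0 (Real.pi / 2)) :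
    ∃ F : ℂ → ℂ, TendstoUniformlyOn
      (fun m s => ∑ n ∈ Finset.range m, a n * Complex.exp (-(lam n : ℂ) * s)) F atTop
      {s : ℂ | |Complex.arg (s - s₀)| ≤ Real.pi / 2 - δ} := by
  obtain ⟨hδ0, hδπ⟩ := hδ
  have hπ : 0 < Real.pi := Real.pi_pos
  have hsin : 0 < Real.sin δ := Real.sin_pos_of_pos_of_lt_pi hδ0 (by linarith)
  set C : ℝ := 1 / Real.sin δ with hCdef
  have hC0 : 0 < C := by positivity
  set b : ℕ → ℂ := fun n => a n * Complex.exp (-(lam n : ℂ) * s₀) with hbdef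
  set A : Set ℂ := {s : ℂ | |Complex.arg (s - s₀)| ≤ Real.pi / 2 - δ} with hA
  -- angle estimate
  have angle : ∀ s ∈ A, s ≠ s₀ → 0 < (s - s₀).re ∧ ‖s - s₀‖ ≤ C * (s - s₀).re := by
    intro s hs hne
    set z := s - s₀ with hzdef
    have hz0 : z ≠ 0 := sub_ne_zero.mpr hne
    have habs : 0 < ‖z‖ := norm_pos_iff.mpr hz0
    have hcos : Real.cos (Complex.arg z) = z.re / ‖z‖ := Complex.cos_arg hz0
    have harg : |Complex.arg z| ≤ Real.pi / 2 - δ := hs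
    have hcos_ge : Real.sin δ ≤ Real.cos (Complex.arg z) := by
      have h1 : Real.cos (Real.pi / 2 - δ) ≤ Real.cos |Complex.arg z| :=
        Real.cos_le_cos_of_nonneg_of_le_pi (abs_nonneg _) (by linarith) harg
      rw [Real.cos_pi_div_two_sub] at h1
      rwa [Real.cos_abs] at h1
    have hre : ‖z‖ * Real.sin δ ≤ z.re := by
      have := mul_le_mul_of_nonneg_left hcos_ge habs.le
      rwa [hcos, mul_div_cancel₀ _ (ne_of_gt habs)] at this
    have hzre : 0 < z.re := lt_of_lt_of_le (by positivity) hre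
    refine ⟨hzre, ?_⟩
    rw [hCdef, div_mul_eq_mul_div, le_div_iff₀ hsin]
    linarith
  -- the Cauchy property
  have hbconv : Tendsto (fun m => ∑ n ∈ Finset.range m, b n) atTop (𝓝 L) := hconv
  have hCauchyb : CauchySeq (fun m => ∑ n ∈ Finset.range m, b n) := hbconv.cauchySeq
  have hrw : ∀ (s : ℂ) (M m : ℕ), M ≤ m →
      (∑ n ∈ Finset.range m, a n * Complex.exp (-(lam n : ℂ) * s))
        - ∑ n ∈ Finset.range M, a n * Complex.exp (-(lam n : ℂ) * s)
      = ∑ n ∈ Finset.Ico M m, (b n) * Complex.exp (-(lam n : ℂ) * (s - s₀)) := by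
    intro s M m hMm
    rw [← Finset.sum_Ico_eq_sub _ hMm]
    apply Finset.sum_congr rfl
    intro n _
    rw [hbdef]
    rw [mul_assoc, ← Complex.exp_add]
    ring_nf
  have hucs : UniformCauchySeqOn
      (fun m s => ∑ n ∈ Finset.range m, a n * Complex.exp (-(lam n : ℂ) * s)) atTop A := by
    rw [Metric.uniformCauchySeqOn_iff]
    intro ε hε
    have h1C : (0:ℝ) < 1 + C := by linarith
    set ε' : ℝ := ε / (4 * (1 + C)) with hε'def
    have hε'0 : 0 < ε' := by positivity
    obtain ⟨N, hN⟩ := Metric.cauchySeq_iff'.mp hCauchyb ε' hε'0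
    refine ⟨N, ?_⟩
    have key : ∀ m ≥ N, ∀ m' ≥ N, m ≤ m' → ∀ x ∈ A,
        dist (∑ n ∈ Finset.range m, a n * Complex.exp (-(lam n : ℂ) * x))
          (∑ n ∈ Finset.range m', a n * Complex.exp (-(lam n : ℂ) * x)) < ε := by
      intro m hm m' hm' hmm' x hx
      rw [dist_comm, dist_eq_norm, hrw x m m' hmm']
      have hT : ∀ n, m ≤ n → n ≤ m' → ‖∑ k ∈ Finset.Ico m n, b k‖ ≤ ε / (2 * (1 + C)) := by
        intro n hn _
        rw [Finset.sum_Ico_eq_sub _ hn]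
        have h1 := hN n (le_trans hm hn)
        have h2 := hN m hm
        rw [dist_eq_norm] at h1 h2
        have hsplit : (∑ k ∈ Finset.range n, b k) - ∑ k ∈ Finset.range m, b k
            = ((∑ k ∈ Finset.range n, b k) - ∑ k ∈ Finset.range N, b k)
              - ((∑ k ∈ Finset.range m, b k) - ∑ k ∈ Finset.range N, b k) := by ring
        rw [hsplit]
        calc ‖((∑ k ∈ Finset.range n, b k) - ∑ k ∈ Finset.range N, b k)
              - ((∑ k ∈ Finset.range m, b k) - ∑ k ∈ Finset.range N, b k)‖
            ≤ ‖(∑ k ∈ Finset.range n, b k) - ∑ k ∈ Finset.range N, b k‖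
              + ‖(∑ k ∈ Finset.range m, b k) - ∑ k ∈ Finset.range N, b k‖ :=
              norm_sub_le _ _
          _ ≤ ε' + ε' := add_le_add h1.le h2.le
          _ = ε / (2 * (1 + C)) := by rw [hε'def]; field_simp; ring
      by_cases hxs : x = s₀
      · have hone : ∀ n : ℕ, Complex.exp (-(lam n : ℂ) * (x - s₀)) = 1 := by
          intro n; rw [hxs]; simp
        calc ‖∑ n ∈ Finset.Ico m m', b n * Complex.exp (-(lam n : ℂ) * (x - s₀))‖
            = ‖∑ n ∈ Finset.Ico m m', b n‖ := by
              congr 1; apply Finset.sum_congr rfl; intro n _; rw [hone n, mul_one]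
          _ ≤ ε / (2 * (1 + C)) := hT m' hmm' le_rfl
          _ < ε := by
              rw [div_lt_iff₀ (by linarith)]
              nlinarith
      · obtain ⟨hzre, hzabs⟩ := angle x hx hxs
        calc ‖∑ n ∈ Finset.Ico m m', b n * Complex.exp (-(lam n : ℂ) * (x - s₀))‖
            ≤ (1 + C) * (ε / (2 * (1 + C))) :=
              abel_bound b lam hmono.monotone hnonneg hzre hzabs
                (by positivity) hmm' hT
          _ = ε / 2 := by field_simp
          _ < ε := by linarith
    intro m hm m' hm' x hx
    rcases le_total m m' with h | h
    · exact key m hm m' hm' h x hx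
    · rw [dist_comm]; exact key m' hm' m hm h x hx
  -- pointwise limits exist
  have hptwise : ∀ x ∈ A, ∃ l : ℂ, Tendsto
      (fun m => ∑ n ∈ Finset.range m, a n * Complex.exp (-(lam n : ℂ) * x)) atTop (𝓝 l) := by
    intro x hx
    exact cauchySeq_tendsto_of_complete (hucs.cauchySeq hx)
  classical
  choose! F hF using hptwise
  exact ⟨F, hucs.tendstoUniformlyOn_of_tendsto hF⟩
end

section
/- Let f be holomorphic on the right half-plane ℂ₊ and suppose f′ is bounded on a fat approach region Ω(ζ) to a point ζ ∈ iℝ. Then f has a finite nontangential limit at ζ. -/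
open Complex Filter Set MeasureTheory
open scoped Real Topology NNReal

/-- `Ω` is a fat approach region (relative to the right half-plane) to the point `i t₀`. -/
def IsFatApproachRegion (t₀ : ℝ) (Ω : Set ℂ) : Prop :=
  ∃ (a b : ℝ) (φ : ℝ → ℝ) (K : NNReal), 0 < a ∧ 0 < b ∧
    LipschitzOnWith K φ (Set.Icc (-a) a) ∧ (∀ y ∈ Set.Icc (-a) a, 0 ≤ φ y) ∧
    MeasureTheory.IntegrableOn (fun y => φ y / y ^ 2) (Set.Icc (-a) a) ∧
    Ω = {s : ℂ | |s.im - t₀| < a ∧ φ (s.im - t₀) < s.re ∧ s.re < b}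

/-- `f` has nontangential limit `L` at `ζ`: convergence within every Stolz region. -/
def HasNTLimitAt (f : ℂ → ℂ) (ζ L : ℂ) : Prop :=
  ∀ δ ∈ Set.Ioo 0 (Real.pi / 2),
    Filter.Tendsto f
      (nhdsWithin ζ {s : ℂ | s ≠ ζ ∧ |Complex.arg (s - ζ)| ≤ Real.pi / 2 - δ}) (nhds L)

lemma uIcc_facts {η y₁ y : ℝ} (hηpos : 0 < η) (hη1 : η ≤ 1)
    (hy : y ∈ Set.uIcc ((1 - η) * y₁) y₁) : |y - y₁| ≤ η * |y₁| ∧ |y| ≤ |y₁| := by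
  rw [Set.uIcc_eq_union] at hy
  have hmem : ((1 - η) * y₁ ≤ y ∧ y ≤ y₁) ∨ (y₁ ≤ y ∧ y ≤ (1 - η) * y₁) := by
    rcases hy with hy | hy
    · exact Or.inl ⟨hy.1, hy.2⟩
    · exact Or.inr ⟨hy.1, hy.2⟩
  have hy₁a := le_abs_self y₁
  have hy₁b := neg_abs_le y₁
  have e1 : η * y₁ ≤ η * |y₁| := mul_le_mul_of_nonneg_left hy₁a hηpos.le
  have e2 : -(η * |y₁|) ≤ η * y₁ := by
    have := mul_le_mul_of_nonneg_left hy₁b hηpos.le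
    linarith
  have e3 : 0 ≤ η * |y₁| := mul_nonneg hηpos.le (abs_nonneg y₁)
  constructor
  · rw [abs_le]
    rcases hmem with ⟨h1, h2⟩ | ⟨h1, h2⟩ <;> constructor <;> nlinarith
  · have habs' : |(1 - η) * y₁| ≤ |y₁| := by
      rw [abs_mul]
      have : |1 - η| ≤ 1 := by rw [abs_le]; constructor <;> linarith
      nlinarith [abs_nonneg y₁]
    rcases hmem with ⟨h1, h2⟩ | ⟨h1, h2⟩
    · exact (abs_le_max_abs_abs h1 h2).trans (max_le habs' le_rfl)
    · exact (abs_le_max_abs_abs h1 h2).trans (max_le le_rfl habs')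

set_option maxHeartbeats 1000000 in
lemma phi_small {a : ℝ} (ha : 0 < a) {φ : ℝ → ℝ} {K : NNReal}
    (hlip : LipschitzOnWith K φ (Set.Icc (-a) a))
    (hφ0 : ∀ y ∈ Set.Icc (-a) a, 0 ≤ φ y)
    (hint : MeasureTheory.IntegrableOn (fun y => φ y / y ^ 2) (Set.Icc (-a) a))
    {ε : ℝ} (hε : 0 < ε) :
    ∃ ρ, 0 < ρ ∧ ρ ≤ a ∧ ∀ y, |y| < ρ → φ y ≤ ε * |y| := by
  set g : ℝ → ℝ := fun y => φ y / y ^ 2 with hg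
  set K' : ℝ := max (K : ℝ) ε with hK'def
  have hK'pos : 0 < K' := lt_max_of_lt_right hε
  have hKK' : (K : ℝ) ≤ K' := le_max_left _ _
  have hεK' : ε ≤ K' := le_max_right _ _
  set c' : ℝ := ε ^ 2 / (4 * K') with hc'def
  have hc'pos : 0 < c' := by positivity
  -- Lipschitz in real form
  have hlipR : ∀ x ∈ Set.Icc (-a) a, ∀ y ∈ Set.Icc (-a) a, |φ x - φ y| ≤ K' * |x - y| := by
    intro x hx y hy
    have := hlip.dist_le_mul x hx y hy
    rw [Real.dist_eq, Real.dist_eq] at this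
    exact this.trans (by gcongr)
  -- shrinking integrals
  have hshrink : ∃ n : ℕ, (∫ y in Set.Icc (-a) a ∩ Set.Ioo (-(a / (n + 1))) (a / (n + 1)), g y) < c' := by
    have htend : Tendsto (fun n : ℕ => ∫ y in Set.Icc (-a) a,
        (Set.Ioo (-(a / (n + 1))) (a / (n + 1))).indicator g y) atTop (𝓝 0) := by
      have h0 : (0 : ℝ) = ∫ y in Set.Icc (-a) a, (0 : ℝ) := by simp
      rw [h0]
      apply MeasureTheory.tendsto_integral_of_dominated_convergence (fun y => |g y|)
      · intro n
        exact hint.aestronglyMeasurable.indicator measurableSet_Ioo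
      · exact hint.abs
      · intro n
        filter_upwards with y
        rw [Real.norm_eq_abs]
        by_cases hy : y ∈ Set.Ioo (-(a / (n + 1))) (a / (n + 1))
        · rw [Set.indicator_of_mem hy]
        · rw [Set.indicator_of_notMem hy]
          simp [abs_nonneg]
      · have hnull : ∀ᵐ y : ℝ, y ≠ 0 := by
          have : (volume : Measure ℝ) {(0 : ℝ)} = 0 := measure_singleton 0
          rw [MeasureTheory.ae_iff]
          convert this using 2
          ext y; simp
        apply ae_restrict_of_ae
        filter_upwards [hnull] with y hy
        have h1 : Tendsto (fun n : ℕ => a / (n + 1)) atTop (𝓝 0) := by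
          have := tendsto_one_div_add_atTop_nhds_zero_nat.const_mul a
          simpa [div_eq_mul_inv, mul_comm] using this
        have h2 : ∀ᶠ n : ℕ in atTop, a / (n + 1) < |y| :=
          h1.eventually_lt_const (abs_pos.mpr hy)
        apply tendsto_const_nhds.congr'
        filter_upwards [h2] with n hn
        rw [Set.indicator_of_notMem]
        intro hmem
        have : |y| < a / (n + 1) := abs_lt.mpr ⟨by linarith [hmem.1], hmem.2⟩
        linarith
    have := htend.eventually_lt_const hc'pos
    obtain ⟨n, hn⟩ := this.exists
    refine ⟨n, ?_⟩
    rwa [MeasureTheory.setIntegral_indicator measurableSet_Ioo] at hn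
  obtain ⟨n, hn⟩ := hshrink
  set ρ : ℝ := a / (n + 1) with hρdef
  have hρpos : 0 < ρ := by positivity
  have hρa : ρ ≤ a := by
    rw [hρdef, div_le_iff₀ (by positivity)]
    nlinarith [Nat.cast_nonneg (α := ℝ) n]
  refine ⟨ρ, hρpos, hρa, ?_⟩
  by_contra hcon
  push_neg at hcon
  obtain ⟨y₀, hy₀ρ, hy₀φ⟩ := hcon
  -- produce a nonzero violating point
  obtain ⟨y₁, hy₁ne, hy₁ρ, hy₁φ⟩ : ∃ y₁ : ℝ, y₁ ≠ 0 ∧ |y₁| < ρ ∧ ε * |y₁| < φ y₁ := by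
    rcases eq_or_ne y₀ 0 with h0 | h0
    · have hφ0pos : 0 < φ 0 := by
        have := hy₀φ; rw [h0] at this; simpa using this
      set y₁ : ℝ := min (ρ / 2) (φ 0 / (4 * K')) with hy₁def
      have hy₁pos : 0 < y₁ := lt_min (by positivity) (by positivity)
      have hy₁lt : y₁ < ρ := (min_le_left _ _).trans_lt (by linarith)
      have hy₁le : K' * y₁ ≤ φ 0 / 4 := by
        have : y₁ ≤ φ 0 / (4 * K') := min_le_right _ _
        calc K' * y₁ ≤ K' * (φ 0 / (4 * K')) := by gcongr
          _ = φ 0 / 4 := by field_simp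
      have hy₁Icc : y₁ ∈ Set.Icc (-a) a := by
        constructor <;> nlinarith
      have h0Icc : (0 : ℝ) ∈ Set.Icc (-a) a := by constructor <;> linarith
      have := hlipR y₁ hy₁Icc 0 h0Icc
      rw [sub_zero] at this
      have hφy₁ : φ 0 - K' * y₁ ≤ φ y₁ := by
        have := (abs_le.mp this).1
        rw [abs_of_pos hy₁pos] at this
        linarith
      refine ⟨y₁, ne_of_gt hy₁pos, by rwa [abs_of_pos hy₁pos], ?_⟩
      rw [abs_of_pos hy₁pos]
      have hεy₁ : ε * y₁ ≤ K' * y₁ := by gcongr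
      nlinarith
    · exact ⟨y₀, h0, hy₀ρ, hy₀φ⟩
  -- the interval J
  set η : ℝ := ε / (2 * K') with hηdef
  have hηpos : 0 < η := by positivity
  have hη2 : η ≤ 1 / 2 := by
    rw [hηdef, div_le_div_iff₀ (by positivity) (by norm_num)]
    nlinarith
  set J : Set ℝ := Set.uIcc ((1 - η) * y₁) y₁ with hJdef
  have habs₁ : 0 < |y₁| := abs_pos.mpr hy₁ne
  -- facts about J
  have hJfacts : ∀ y ∈ J, |y - y₁| ≤ η * |y₁| ∧ |y| ≤ |y₁| := by
    intro y hy
    exact uIcc_facts hηpos (by linarith) (hJdef ▸ hy)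
  -- lower bound for y in J
  have hJg : ∀ y ∈ J, ε / (2 * |y₁|) ≤ g y := by
    intro y hy
    obtain ⟨hd, habs⟩ := hJfacts y hy
    have hylt : |y| < ρ := lt_of_le_of_lt habs hy₁ρ
    have hyIcc : y ∈ Set.Icc (-a) a := by
      rw [Set.mem_Icc, ← abs_le]; exact le_trans hylt.le hρa
    have hy₁Icc : y₁ ∈ Set.Icc (-a) a := by
      rw [Set.mem_Icc, ← abs_le]; exact le_trans hy₁ρ.le hρa
    have hlb : ε * |y₁| / 2 ≤ φ y := by
      have h := hlipR y hyIcc y₁ hy₁Icc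
      have h2 : K' * |y - y₁| ≤ K' * (η * |y₁|) := by gcongr
      have h3 : K' * (η * |y₁|) = ε * |y₁| / 2 := by
        rw [hηdef]; field_simp
      have h4 := (abs_le.mp h).1
      linarith
    have hyne : |y₁| / 2 ≤ |y| := by
      have h7 := abs_sub_abs_le_abs_sub y₁ y
      rw [abs_sub_comm] at hd
      have h8 : η * |y₁| ≤ 1 / 2 * |y₁| := mul_le_mul_of_nonneg_right hη2 (abs_nonneg y₁)
      linarith
    have hyabs : 0 < |y| := by linarith
    have hy2pos : 0 < y ^ 2 := by rw [← _root_.sq_abs]; positivity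
    have hy2le : y ^ 2 ≤ y₁ ^ 2 := by
      rw [← _root_.sq_abs y, ← _root_.sq_abs y₁]
      exact pow_le_pow_left₀ (abs_nonneg y) habs 2
    have h5 : φ y / y₁ ^ 2 ≤ φ y / y ^ 2 :=
      div_le_div_of_nonneg_left (hφ0 y hyIcc) hy2pos hy2le
    have h6 : ε / (2 * |y₁|) ≤ φ y / y₁ ^ 2 := by
      rw [div_le_div_iff₀ (by positivity) (by positivity)]
      have hsq : y₁ ^ 2 = |y₁| ^ 2 := (_root_.sq_abs y₁).symm
      have h9 := mul_le_mul_of_nonneg_right hlb (abs_nonneg y₁)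
      rw [hsq]
      nlinarith [h9]
    exact h6.trans h5
  -- J is inside the small region
  have hJsub : J ⊆ Set.Icc (-a) a ∩ Set.Ioo (-ρ) ρ := by
    intro y hy
    have habs := (hJfacts y hy).2
    have hylt : |y| < ρ := lt_of_le_of_lt habs hy₁ρ
    refine ⟨?_, ?_⟩
    · rw [Set.mem_Icc, ← abs_le]
      exact le_trans hylt.le hρa
    · rw [Set.mem_Ioo, ← abs_lt]
      exact hylt
  have hJmeas : MeasurableSet J := measurableSet_uIcc
  have hvol : volume J = ENNReal.ofReal (η * |y₁|) := by
    rw [hJdef, Set.uIcc, Real.volume_Icc, max_sub_min_eq_abs]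
    congr 1
    have e : y₁ - (1 - η) * y₁ = η * y₁ := by ring
    rw [e, abs_mul, abs_of_pos hηpos]
  have hμJ : volume J ≠ ⊤ := by rw [hvol]; exact ENNReal.ofReal_ne_top
  have hJint : MeasureTheory.IntegrableOn g J volume :=
    hint.mono_set (hJsub.trans Set.inter_subset_left)
  have hbig : c' ≤ ∫ y in J, g y := by
    have h := MeasureTheory.setIntegral_ge_of_const_le hJmeas hμJ hJg hJint
    have hvr : (volume J).toReal = η * |y₁| := by
      rw [hvol, ENNReal.toReal_ofReal (by positivity)]
    rw [measureReal_def, hvr] at h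
    refine le_trans (le_of_eq ?_) h
    rw [hc'def, hηdef]
    rw [smul_eq_mul]
    field_simp
    ring
  have hmono : (∫ y in J, g y) ≤ ∫ y in Set.Icc (-a) a ∩ Set.Ioo (-ρ) ρ, g y := by
    apply MeasureTheory.setIntegral_mono_set (hint.mono_set Set.inter_subset_left) ?_
      (HasSubset.Subset.eventuallyLE hJsub)
    filter_upwards [ae_restrict_mem (measurableSet_Icc.inter measurableSet_Ioo)] with y hy
    exact div_nonneg (hφ0 y hy.1) (sq_nonneg y)
  linarith

lemma arg_cone {w : ℂ} (hw : w ≠ 0) {δ : ℝ} (hδ0 : 0 < δ) (hδ2 : δ < Real.pi / 2)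
    (harg : |Complex.arg w| ≤ Real.pi / 2 - δ) :
    0 < w.re ∧ |w.im| ≤ Real.tan (Real.pi / 2 - δ) * w.re := by
  have hre : 0 < w.re := by
    have h : |Complex.arg w| < Real.pi / 2 := lt_of_le_of_lt harg (by linarith)
    rcases Complex.abs_arg_lt_pi_div_two_iff.mp h with h | h
    · exact h
    · exact absurd h hw
  refine ⟨hre, ?_⟩
  have hargmem : |Complex.arg w| ∈ Set.Ioo (-(Real.pi / 2)) (Real.pi / 2) :=
    ⟨lt_of_lt_of_le (by linarith) (abs_nonneg _), lt_of_le_of_lt harg (by linarith)⟩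
  have hmmem : Real.pi / 2 - δ ∈ Set.Ioo (-(Real.pi / 2)) (Real.pi / 2) :=
    ⟨by linarith, by linarith⟩
  have hmono : Real.tan |Complex.arg w| ≤ Real.tan (Real.pi / 2 - δ) :=
    Real.strictMonoOn_tan.monotoneOn hargmem hmmem harg
  have habs : |Real.tan (Complex.arg w)| = Real.tan |Complex.arg w| := by
    rcases le_or_gt 0 (Complex.arg w) with h | h
    · rw [_root_.abs_of_nonneg h, _root_.abs_of_nonneg]
      refine Real.tan_nonneg_of_nonneg_of_le_pi_div_two h ?_
      have := le_abs_self (Complex.arg w)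
      linarith
    · rw [_root_.abs_of_neg h, Real.tan_neg]
      have h2 : -Complex.arg w ≤ Real.pi / 2 := by
        have h3 := harg; rw [_root_.abs_of_neg h] at h3; linarith
      have h4 := Real.tan_nonneg_of_nonneg_of_le_pi_div_two (by linarith : (0:ℝ) ≤ -Complex.arg w) h2
      rw [Real.tan_neg] at h4
      rw [_root_.abs_of_nonpos (by linarith : Real.tan (Complex.arg w) ≤ 0)]
  have ht : Real.tan (Complex.arg w) = w.im / w.re := Complex.tan_arg w
  have h1 : |w.im| / w.re ≤ Real.tan (Real.pi / 2 - δ) := by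
    have : |w.im / w.re| = |w.im| / w.re := by
      rw [abs_div, abs_of_pos hre]
    rw [← this, ← ht, habs]
    exact hmono
  calc |w.im| = |w.im| / w.re * w.re := by field_simp
    _ ≤ Real.tan (Real.pi / 2 - δ) * w.re := mul_le_mul_of_nonneg_right h1 hre.le

/-- A truncated cone (Stolz-type region) at `i t₀`. -/
def Sreg (t₀ m r : ℝ) : Set ℂ := {s : ℂ | 0 < s.re ∧ s.re < r ∧ |s.im - t₀| ≤ m * s.re}

lemma convex_Sreg (t₀ m r : ℝ) : Convex ℝ (Sreg t₀ m r) := by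
  have hlin1 : IsLinearMap ℝ (fun s : ℂ => s.im - m * s.re) := by
    constructor
    · intro x y; simp [Complex.add_im, Complex.add_re]; ring
    · intro c x; simp [Complex.smul_im, Complex.smul_re]; ring
  have hlin2 : IsLinearMap ℝ (fun s : ℂ => -s.im - m * s.re) := by
    constructor
    · intro x y; simp [Complex.add_im, Complex.add_re]; ring
    · intro c x; simp [Complex.smul_im, Complex.smul_re]; ring
  have heq : Sreg t₀ m r = ({s : ℂ | 0 < s.re} ∩ {s : ℂ | s.re < r}) ∩
      ({s : ℂ | s.im - m * s.re ≤ t₀} ∩ {s : ℂ | -s.im - m * s.re ≤ -t₀}) := by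
    ext s
    simp only [Sreg, Set.mem_setOf_eq, Set.mem_inter_iff]
    constructor
    · rintro ⟨h1, h2, h3⟩
      have h4 := abs_le.mp h3
      exact ⟨⟨h1, h2⟩, by linarith [h4.2], by linarith [h4.1]⟩
    · rintro ⟨⟨h1, h2⟩, h3, h4⟩
      exact ⟨h1, h2, abs_le.mpr ⟨by linarith, by linarith⟩⟩
  rw [heq]
  exact ((convex_halfSpace_re_gt 0).inter (convex_halfSpace_re_lt r)).inter
    ((convex_halfSpace_le hlin1 t₀).inter (convex_halfSpace_le hlin2 (-t₀)))

lemma mem_closure_Sreg (t₀ : ℝ) {m r : ℝ} (hm : 0 ≤ m) (hr : 0 < r) :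
    (Complex.I * (t₀ : ℂ)) ∈ closure (Sreg t₀ m r) := by
  rw [Metric.mem_closure_iff]
  intro ε hε
  set x : ℝ := min (r / 2) (ε / 2) with hx
  have hx0 : 0 < x := lt_min (by linarith) (by linarith)
  have hre : (Complex.I * (t₀ : ℂ) + (x : ℂ)).re = x := by simp
  have him : (Complex.I * (t₀ : ℂ) + (x : ℂ)).im = t₀ := by simp
  refine ⟨Complex.I * (t₀ : ℂ) + (x : ℂ), ⟨?_, ?_, ?_⟩, ?_⟩
  · rw [hre]; exact hx0
  · rw [hre]; exact lt_of_le_of_lt (min_le_left _ _) (by linarith)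
  · rw [hre, him]
    simp only [sub_self, abs_zero]
    positivity
  · rw [dist_self_add_right]
    have : ‖(x : ℂ)‖ = |x| := by
      rw [Complex.norm_real, Real.norm_eq_abs]
    rw [this, abs_of_pos hx0]
    exact lt_of_le_of_lt (min_le_right _ _) (by linarith)

lemma key_tendsto (f : ℂ → ℂ) (hf : DifferentiableOn ℂ f {s : ℂ | 0 < s.re})
    {t₀ C m r : ℝ} (hC : ∀ s ∈ Sreg t₀ m r, ‖deriv f s‖ ≤ C) (hm : 0 < m) (hr : 0 < r) :
    ∃ L : ℂ, Tendsto f (𝓝[Sreg t₀ m r] (Complex.I * (t₀ : ℂ))) (𝓝 L) := by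
  set C' : ℝ := max C 0 with hC'def
  have hC'0 : 0 ≤ C' := le_max_right _ _
  have hopen : IsOpen {s : ℂ | 0 < s.re} := isOpen_lt continuous_const Complex.continuous_re
  have hderiv : ∀ s ∈ Sreg t₀ m r, HasDerivWithinAt f (deriv f s) (Sreg t₀ m r) s := by
    intro s hs
    exact ((hf.differentiableAt (hopen.mem_nhds hs.1)).hasDerivAt).hasDerivWithinAt
  have hbound : ∀ s ∈ Sreg t₀ m r, ‖deriv f s‖ ≤ C' :=
    fun s hs => (hC s hs).trans (le_max_left _ _)
  have hlipf : ∀ x ∈ Sreg t₀ m r, ∀ y ∈ Sreg t₀ m r, ‖f y - f x‖ ≤ C' * ‖y - x‖ :=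
    fun x hx y hy =>
      (convex_Sreg t₀ m r).norm_image_sub_le_of_norm_hasDerivWithin_le hderiv hbound hx hy
  have hnb : (𝓝[Sreg t₀ m r] (Complex.I * (t₀ : ℂ))).NeBot :=
    mem_closure_iff_nhdsWithin_neBot.mp (mem_closure_Sreg t₀ hm.le hr)
  have hcauchy : Cauchy (map f (𝓝[Sreg t₀ m r] (Complex.I * (t₀ : ℂ)))) := by
    rw [Metric.cauchy_iff]
    refine ⟨hnb.map f, ?_⟩
    intro ε hε
    set ρ : ℝ := ε / (2 * (C' + 1)) with hρdef
    have hρ0 : 0 < ρ := by positivity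
    refine ⟨f '' (Sreg t₀ m r ∩ Metric.ball (Complex.I * (t₀ : ℂ)) ρ), ?_, ?_⟩
    · exact image_mem_map (inter_mem_nhdsWithin _ (Metric.ball_mem_nhds _ hρ0))
    · rintro u ⟨x, hx, rfl⟩ v ⟨y, hy, rfl⟩
      have h1 := hlipf x hx.1 y hy.1
      have hxb : dist x (Complex.I * (t₀ : ℂ)) < ρ := Metric.mem_ball.mp hx.2
      have hyb : dist y (Complex.I * (t₀ : ℂ)) < ρ := Metric.mem_ball.mp hy.2
      have h2 : dist y x < 2 * ρ := by
        have := dist_triangle y (Complex.I * (t₀ : ℂ)) x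
        rw [dist_comm (Complex.I * (t₀ : ℂ)) x] at this
        linarith
      have h3 : dist (f x) (f y) ≤ C' * dist y x := by
        rw [dist_comm, dist_eq_norm]
        rw [dist_eq_norm]
        exact h1
      have h4 : C' * dist y x ≤ C' * (2 * ρ) :=
        mul_le_mul_of_nonneg_left h2.le hC'0
      have h5 : C' * (2 * ρ) < ε := by
        rw [hρdef]
        rw [div_eq_mul_inv]
        have h6 : C' * (2 * (ε * (2 * (C' + 1))⁻¹)) = ε * (C' / (C' + 1)) := by
          field_simp
        rw [h6]
        have h7 : C' / (C' + 1) < 1 := by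
          rw [div_lt_one (by linarith)]; linarith
        nlinarith
      calc dist (f x) (f y) ≤ C' * dist y x := h3
        _ ≤ C' * (2 * ρ) := h4
        _ < ε := h5
  obtain ⟨L, hL⟩ := CompleteSpace.complete hcauchy
  exact ⟨L, hL⟩

/-- If `f` is holomorphic on the right half-plane and `f'` is bounded on a fat approach
region to `i t₀`, then `f` has a finite nontangential limit at `i t₀`. -/
theorem stmt_9 (f : ℂ → ℂ) (hf : DifferentiableOn ℂ f {s : ℂ | 0 < s.re})
    (t₀ : ℝ) (Ω : Set ℂ) (hΩ : IsFatApproachRegion t₀ Ω)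
    (hbd : ∃ C : ℝ, ∀ s ∈ Ω, ‖deriv f s‖ ≤ C) :
    ∃ L : ℂ, HasNTLimitAt f (Complex.I * t₀) L := by
  obtain ⟨a, b, φ, K, ha, hb, hlip, hφ0, hint, hΩeq⟩ := hΩ
  obtain ⟨C, hC⟩ := hbd
  -- each truncated cone of small enough radius is inside Ω
  have hsub : ∀ m : ℝ, 0 < m → ∃ r, 0 < r ∧ Sreg t₀ m r ⊆ Ω := by
    intro m hm
    have hε : (0 : ℝ) < 1 / (2 * (m + 1)) := by positivity
    obtain ⟨ρ, hρ0, hρa, hρ⟩ := phi_small ha hlip hφ0 hint hε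
    set M : ℝ := min ρ (min a b) with hM
    have hM0 : 0 < M := lt_min hρ0 (lt_min ha hb)
    refine ⟨M / (m + 1), by positivity, ?_⟩
    rintro s ⟨h1, h2, h3⟩
    rw [hΩeq]
    have e1 : m * s.re < m * (M / (m + 1)) := mul_lt_mul_of_pos_left h2 hm
    have e2 : m * (M / (m + 1)) ≤ M := by
      rw [mul_div_assoc', div_le_iff₀ (by positivity : (0 : ℝ) < m + 1)]
      nlinarith
    have him : |s.im - t₀| < M := lt_of_le_of_lt h3 (lt_of_lt_of_le e1 e2)
    refine ⟨lt_of_lt_of_le him (le_trans (min_le_right _ _) (min_le_left _ _)), ?_, ?_⟩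
    · have h4 := hρ (s.im - t₀) (lt_of_lt_of_le him (min_le_left _ _))
      have h5 : 1 / (2 * (m + 1)) * |s.im - t₀| ≤ 1 / (2 * (m + 1)) * (m * s.re) :=
        mul_le_mul_of_nonneg_left h3 (by positivity)
      have h6 : 1 / (2 * (m + 1)) * (m * s.re) ≤ s.re / 2 := by
        have e3 : 1 / (2 * (m + 1)) * (m * s.re) = m * s.re / (2 * (m + 1)) := by ring
        rw [e3, div_le_div_iff₀ (by positivity) (by norm_num)]
        nlinarith
      linarith
    · refine lt_of_lt_of_le h2 (le_trans (div_le_self hM0.le (by linarith)) ?_)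
      exact le_trans (min_le_right _ _) (min_le_right _ _)
  obtain ⟨r₀, hr₀, hsub₀⟩ := hsub 1 one_pos
  obtain ⟨L, hL⟩ := key_tendsto f hf (fun s hs => hC s (hsub₀ hs)) one_pos hr₀
  refine ⟨L, ?_⟩
  rintro δ ⟨hδ0, hδ2⟩
  set m : ℝ := Real.tan (Real.pi / 2 - δ) with hmdef
  have hm0 : 0 < m := Real.tan_pos_of_pos_of_lt_pi_div_two (by linarith) (by linarith)
  obtain ⟨r₁, hr₁, hsub₁⟩ := hsub m hm0
  obtain ⟨L₁, hL₁⟩ := key_tendsto f hf (fun s hs => hC s (hsub₁ hs)) hm0 hr₁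
  -- the limits agree (compare along a smaller common cone)
  have hcone1 : Sreg t₀ (min 1 m) (min r₀ r₁) ⊆ Sreg t₀ 1 r₀ := by
    rintro s ⟨h1, h2, h3⟩
    exact ⟨h1, lt_of_lt_of_le h2 (min_le_left _ _),
      le_trans h3 (mul_le_mul_of_nonneg_right (min_le_left _ _) h1.le)⟩
  have hcone2 : Sreg t₀ (min 1 m) (min r₀ r₁) ⊆ Sreg t₀ m r₁ := by
    rintro s ⟨h1, h2, h3⟩
    exact ⟨h1, lt_of_lt_of_le h2 (min_le_right _ _),
      le_trans h3 (mul_le_mul_of_nonneg_right (min_le_right _ _) h1.le)⟩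
  have hnb : (𝓝[Sreg t₀ (min 1 m) (min r₀ r₁)] (Complex.I * (t₀ : ℂ))).NeBot :=
    mem_closure_iff_nhdsWithin_neBot.mp
      (mem_closure_Sreg t₀ (lt_min one_pos hm0).le (lt_min hr₀ hr₁))
  have hEq : L₁ = L :=
    tendsto_nhds_unique (hL₁.mono_left (nhdsWithin_mono _ hcone2))
      (hL.mono_left (nhdsWithin_mono _ hcone1))
  rw [nhdsWithin_restrict' _ (Metric.ball_mem_nhds (Complex.I * (t₀ : ℂ)) hr₁)]
  refine (hEq ▸ hL₁).mono_left (nhdsWithin_mono _ ?_)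
  rintro s ⟨⟨hne, harg⟩, hball⟩
  have hw : s - Complex.I * (t₀ : ℂ) ≠ 0 := sub_ne_zero.mpr hne
  obtain ⟨hre, him⟩ := arg_cone hw hδ0 hδ2 harg
  have hre' : (s - Complex.I * (t₀ : ℂ)).re = s.re := by simp
  have him' : (s - Complex.I * (t₀ : ℂ)).im = s.im - t₀ := by simp
  rw [hre'] at hre
  rw [hre', him'] at him
  refine ⟨hre, ?_, him⟩
  have hd : dist s (Complex.I * (t₀ : ℂ)) < r₁ := Metric.mem_ball.mp hball
  rw [Complex.dist_eq] at hd
  calc s.re ≤ |(s - Complex.I * (t₀ : ℂ)).re| := by rw [hre']; exact le_abs_self _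
    _ ≤ ‖s - Complex.I * (t₀ : ℂ)‖ := Complex.abs_re_le_norm _
    _ < r₁ := hd
end

section
/- Suppose a subsequence (∑_{n=1}^{m_k} n^{-s}) of the partial sums of the Riemann zeta series converges pointwise on a set E contained in the line {Re s = 1}, with limit function S. Then S(s) = ζ(s) for almost every s ∈ E (with respect to linear Lebesgue measure on the line). -/
open Complex Filter Set MeasureTheory
open scoped Real Topology FourierTransform

lemma aux_em (s : ℂ) (hs : s ≠ 0) (hre : s.re = 0) :
    ∃ B : ℂ, Tendsto (fun N : ℕ => (∑ n ∈ Finset.range N, ((n : ℂ) + 1) ^ (-(1 + s)))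
      - (((N : ℝ) : ℂ) ^ (-s)) / (-s)) atTop (𝓝 B) := by
  set G : ℝ → ℂ := fun y => ((y : ℂ) ^ (-s)) / (-s) with hG
  set b : ℕ → ℂ := fun N => (∑ n ∈ Finset.range N, ((n : ℂ) + 1) ^ (-(1 + s))) - G (N : ℝ)
    with hb
  have hs1 : (-1 : ℂ) - s ≠ 0 := by
    intro h
    have : ((-1 : ℂ) - s).re = 0 := by rw [h]; simp
    simp [hre] at this
  -- key increment bound
  have key : ∀ N : ℕ, 1 ≤ N → ‖b (N + 1) - b N‖ ≤ ‖1 + s‖ * (((N : ℝ)) ^ 2)⁻¹ := by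
    intro N hN
    have hNpos : (0 : ℝ) < N := by exact_mod_cast hN
    set P : ℂ := (((N : ℝ) + 1 : ℝ) : ℂ) ^ ((-1 : ℂ) - s) with hP
    set K : ℝ := ‖1 + s‖ * (((N : ℝ)) ^ 2)⁻¹ with hK
    have hKnonneg : 0 ≤ K := by positivity
    -- inner bound : for x in Icc N (N+1), ‖x^(-1-s) - (N+1)^(-1-s)‖ ≤ K
    have inner : ∀ x ∈ Icc (N : ℝ) ((N : ℝ) + 1),
        ‖((x : ℂ) ^ ((-1 : ℂ) - s)) - P‖ ≤ K := by
      intro x hx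
      have hx0 : (0 : ℝ) < x := lt_of_lt_of_le hNpos hx.1
      -- apply MVT to ψ y = y^(-1-s) on Icc x (N+1)
      have hψ : ∀ y ∈ Icc (N : ℝ) ((N : ℝ) + 1),
          HasDerivWithinAt (fun y : ℝ => ((y : ℂ) ^ ((-1 : ℂ) - s)))
            (((-1 : ℂ) - s) * (y : ℂ) ^ ((-2 : ℂ) - s)) (Icc (N : ℝ) ((N : ℝ) + 1)) y := by
        intro y hy
        have hy0 : y ≠ 0 := ne_of_gt (lt_of_lt_of_le hNpos hy.1)
        have hr : ((-2 : ℂ) - s) ≠ -1 := by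
          intro h
          apply hs1
          have : ((-2 : ℂ) - s) + 1 = -1 + 1 := by rw [h]
          linear_combination this
        have h1 := (hasDerivAt_ofReal_cpow_const' hy0 hr).const_mul ((-2 : ℂ) - s + 1)
        have h2 : (fun y : ℝ => ((-2 : ℂ) - s + 1) * ((y : ℂ) ^ ((-2 : ℂ) - s + 1) / ((-2:ℂ) - s + 1)))
            = fun y : ℝ => ((y : ℂ) ^ ((-1 : ℂ) - s)) := by
          funext y
          rw [mul_div_cancel₀]
          · congr 1; ring
          · intro h; apply hs1; linear_combination h
        rw [h2] at h1
        have h3 : ((-2 : ℂ) - s + 1) * (y : ℂ) ^ ((-2 : ℂ) - s) = ((-1:ℂ) - s) * (y:ℂ) ^ ((-2:ℂ) - s) := by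
          ring_nf
        rw [h3] at h1
        exact h1.hasDerivWithinAt
      have hbound : ∀ y ∈ Icc (N : ℝ) ((N : ℝ) + 1),
          ‖((-1 : ℂ) - s) * (y : ℂ) ^ ((-2 : ℂ) - s)‖ ≤ K := by
        intro y hy
        have hy0 : (0 : ℝ) < y := lt_of_lt_of_le hNpos hy.1
        rw [norm_mul]
        have h1 : ‖(y : ℂ) ^ ((-2 : ℂ) - s)‖ = y ^ (((-2 : ℂ) - s).re) := by
          rw [Complex.norm_cpow_eq_rpow_re_of_pos hy0]
        have h2 : ((-2 : ℂ) - s).re = (-2 : ℝ) := by simp [hre]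
        rw [h1, h2]
        have h3 : y ^ (-2 : ℝ) ≤ (N : ℝ) ^ (-2 : ℝ) := by
          apply Real.rpow_le_rpow_of_nonpos hNpos hy.1
          norm_num
        have h4 : (N : ℝ) ^ (-2 : ℝ) = (((N : ℝ)) ^ 2)⁻¹ := by
          rw [show (-2:ℝ) = -((2:ℕ):ℝ) by norm_num, Real.rpow_neg hNpos.le, Real.rpow_natCast]
        have h5 : ‖(-1 : ℂ) - s‖ = ‖1 + s‖ := by
          rw [show (-1 : ℂ) - s = -(1 + s) by ring, norm_neg]
        rw [h5, hK]
        calc ‖1 + s‖ * y ^ (-2:ℝ) ≤ ‖1 + s‖ * (N:ℝ) ^ (-2:ℝ) := by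
              apply mul_le_mul_of_nonneg_left h3 (norm_nonneg _)
          _ = ‖1 + s‖ * (((N:ℝ)) ^ 2)⁻¹ := by rw [h4]
      have := (convex_Icc (N : ℝ) ((N : ℝ) + 1)).norm_image_sub_le_of_norm_hasDerivWithin_le
        hψ hbound hx (right_mem_Icc.2 (by linarith))
      calc ‖((x:ℂ) ^ ((-1:ℂ) - s)) - P‖ = ‖P - ((x:ℂ) ^ ((-1:ℂ)-s))‖ := by rw [norm_sub_rev]
        _ ≤ K * ‖((N:ℝ) + 1) - x‖ := this
        _ ≤ K * 1 := by
            apply mul_le_mul_of_nonneg_left _ hKnonneg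
            rw [Real.norm_eq_abs, abs_le]
            constructor <;> [linarith [hx.2]; linarith [hx.1]]
        _ = K := mul_one K
    -- outer MVT on H y = G y - y • P
    set H : ℝ → ℂ := fun y => G y - y • P with hH
    have hHderiv : ∀ x ∈ Icc (N : ℝ) ((N : ℝ) + 1),
        HasDerivWithinAt H (((x : ℂ) ^ ((-1 : ℂ) - s)) - P) (Icc (N : ℝ) ((N : ℝ) + 1)) x := by
      intro x hx
      have hx0 : x ≠ 0 := ne_of_gt (lt_of_lt_of_le hNpos hx.1)
      have hr : ((-1 : ℂ) - s) ≠ -1 := by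
        intro h; apply hs; linear_combination -h
      have h1 := hasDerivAt_ofReal_cpow_const' hx0 hr
      have h2 : (fun y : ℝ => (y : ℂ) ^ ((-1:ℂ) - s + 1) / ((-1:ℂ) - s + 1)) = G := by
        funext y
        rw [hG]
        congr 1
        · congr 1; ring
        · ring
      rw [h2] at h1
      have h3 : HasDerivAt (fun y : ℝ => y • P) ((1:ℝ) • P) x := (hasDerivAt_id x).smul_const P
      have h4 := h1.sub h3
      rw [one_smul] at h4
      exact h4.hasDerivWithinAt
    have houter := (convex_Icc (N : ℝ) ((N : ℝ) + 1)).norm_image_sub_le_of_norm_hasDerivWithin_le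
      hHderiv inner (left_mem_Icc.2 (by linarith)) (right_mem_Icc.2 (by linarith))
    -- identify b (N+1) - b N with -(H (N+1) - H N)
    have hid : b (N + 1) - b N = -(H ((N:ℝ) + 1) - H (N : ℝ)) := by
      rw [hb, hH]
      simp only [Finset.sum_range_succ]
      have hcast : ((N + 1 : ℕ) : ℝ) = (N : ℝ) + 1 := by push_cast; ring
      rw [hcast]
      have hPexp : ((N : ℂ) + 1) ^ (-(1 + s)) = P := by
        rw [hP]
        congr 1
        · push_cast; ring
        · ring
      rw [hPexp]
      simp only [Complex.real_smul]
      push_cast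
      ring
    rw [hid, norm_neg]
    calc ‖H ((N:ℝ) + 1) - H (N:ℝ)‖ ≤ K * ‖(N:ℝ) + 1 - (N:ℝ)‖ := houter
      _ = K := by norm_num
  -- conclude convergence via summability of increments
  set b' : ℕ → ℂ := fun n => b (n + 1) with hb'
  have hsum : Summable (fun n : ℕ => dist (b' n) (b' (n + 1))) := by
    have hmaj : Summable (fun n : ℕ => ‖1 + s‖ * (((n + 1 : ℕ) : ℝ) ^ 2)⁻¹) := by
      apply Summable.mul_left
      have := Real.summable_one_div_nat_pow.2 (show 1 < 2 by norm_num)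
      have h2 := (summable_nat_add_iff 1).2 this
      apply h2.congr
      intro n
      push_cast
      rw [one_div]
    apply Summable.of_nonneg_of_le (fun n => dist_nonneg) _ hmaj
    intro n
    rw [dist_eq_norm, hb', norm_sub_rev]
    exact key (n + 1) (Nat.le_add_left 1 n)
  have hcauchy : CauchySeq b' := cauchySeq_of_summable_dist hsum
  obtain ⟨B, hB⟩ := cauchySeq_tendsto_of_complete hcauchy
  refine ⟨B, ?_⟩
  have : Tendsto b atTop (𝓝 B) := by
    rw [← Filter.tendsto_add_atTop_iff_nat 1]
    exact hB
  exact this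


lemma aux_null (x : ℕ → ℝ) (hmono : Monotone x) (htop : Tendsto x atTop atTop) :
    (volume : Measure ℝ)
      {t : ℝ | ∃ c, Tendsto (fun k => Complex.exp (-(Complex.I * ((t * x k : ℝ) : ℂ))))
        atTop (𝓝 c)} = 0 := by
  set f : ℕ → ℝ → ℂ := fun k t => Complex.exp (-(Complex.I * ((t * x k : ℝ) : ℂ))) with hf
  have hfmeas : ∀ k, Measurable (f k) := by
    intro k
    apply Complex.measurable_exp.comp
    fun_prop
  set D := {t : ℝ | ∃ c, Tendsto (fun k => f k t) atTop (𝓝 c)} with hD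
  have hDmeas : MeasurableSet D := measurableSet_exists_tendsto hfmeas
  have hfnorm : ∀ k t, ‖f k t‖ = 1 := by
    intro k t
    rw [hf]
    simp [Complex.norm_exp]
  -- construct a subsequence with gaps tending to infinity
  obtain ⟨g, hg⟩ : ∃ g : ℝ → ℕ, ∀ a, a ≤ x (g a) := by
    choose g hg using fun a : ℝ => (htop.eventually_ge_atTop a).exists
    exact ⟨g, hg⟩
  set k : ℕ → ℕ := fun j => Nat.rec 0 (fun j kj => g (max (x kj + j) j)) j with hk
  have hk1 : ∀ j : ℕ, x (k j) + j ≤ x (k (j + 1)) := fun j =>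
    le_trans (le_max_left _ _) (hg _)
  have hk2 : ∀ j : ℕ, (j : ℝ) ≤ x (k (j + 1)) := fun j =>
    le_trans (le_max_right _ _) (hg _)
  have hktop : Tendsto k atTop atTop := by
    rw [tendsto_atTop]
    intro b
    filter_upwards [eventually_ge_atTop (⌈x b⌉₊ + 2)] with j hj
    obtain ⟨j', rfl⟩ : ∃ j', j = j' + 1 := ⟨j - 1, by omega⟩
    by_contra hcon
    push_neg at hcon
    have h1 : x (k (j' + 1)) ≤ x b := hmono (le_of_lt hcon)
    have h2 : (j' : ℝ) ≤ x b := le_trans (hk2 j') h1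
    have h3 : x b ≤ ⌈x b⌉₊ := Nat.le_ceil _
    have : (j' : ℝ) ≥ (⌈x b⌉₊ : ℝ) + 1 := by
      have : ⌈x b⌉₊ + 1 ≤ j' := by omega
      exact_mod_cast this
    linarith
  set d : ℕ → ℝ := fun j => x (k (j + 1)) - x (k j) with hd
  have hdtop : Tendsto d atTop atTop := by
    apply tendsto_atTop_mono _ tendsto_natCast_atTop_atTop
    intro j
    have := hk1 j
    rw [hd]; dsimp only; linarith
  -- on D the exponentials with frequencies d j converge to 1
  have hDconv : ∀ t ∈ D, Tendsto (fun j => Complex.exp (-(Complex.I * ((t * d j : ℝ) : ℂ))))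
      atTop (𝓝 1) := by
    intro t ht
    obtain ⟨c, hc⟩ := ht
    have hcnorm : ‖c‖ = 1 := by
      have := hc.norm
      simp only [hfnorm] at this
      exact tendsto_nhds_unique tendsto_const_nhds this |>.symm
    have h1 : Tendsto (fun j => f (k (j + 1)) t) atTop (𝓝 c) :=
      hc.comp (hktop.comp (tendsto_add_atTop_nat 1))
    have h2 : Tendsto (fun j => (starRingEnd ℂ) (f (k j) t)) atTop (𝓝 ((starRingEnd ℂ) c)) :=
      (Complex.continuous_conj.tendsto c).comp (hc.comp hktop)
    have h3 := h1.mul h2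
    have heq : (fun j => f (k (j + 1)) t * (starRingEnd ℂ) (f (k j) t))
        = fun j => Complex.exp (-(Complex.I * ((t * d j : ℝ) : ℂ))) := by
      funext j
      rw [hf]
      dsimp only
      rw [← Complex.exp_conj, ← Complex.exp_add]
      congr 1
      have : (starRingEnd ℂ) (-(Complex.I * ((t * x (k j) : ℝ) : ℂ)))
          = Complex.I * ((t * x (k j) : ℝ) : ℂ) := by
        simp [map_mul, Complex.conj_I, Complex.conj_ofReal]
      rw [this, hd]
      push_cast
      ring
    rw [heq] at h3
    have : c * (starRingEnd ℂ) c = 1 := by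
      rw [Complex.mul_conj]
      rw [Complex.normSq_eq_norm_sq, hcnorm]
      norm_num
    rwa [this] at h3
  -- each truncation has measure zero
  have hB : ∀ R : ℕ, (volume : Measure ℝ) (D ∩ Icc (-(R:ℝ)) R) = 0 := by
    intro R
    set B := D ∩ Icc (-(R:ℝ)) R with hBdef
    have hBmeas : MeasurableSet B := hDmeas.inter measurableSet_Icc
    have hBfin : (volume : Measure ℝ) B < ⊤ :=
      lt_of_le_of_lt (measure_mono inter_subset_right) (by
        rw [Real.volume_Icc]; exact ENNReal.ofReal_lt_top)
    -- dominated convergence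
    have hDCT : Tendsto (fun j => ∫ t in B, Complex.exp (-(Complex.I * ((t * d j : ℝ) : ℂ))))
        atTop (𝓝 (∫ t in B, (1 : ℂ))) := by
      apply tendsto_integral_of_dominated_convergence (fun _ => (1 : ℝ))
      · intro j
        apply Measurable.aestronglyMeasurable
        apply Complex.measurable_exp.comp
        fun_prop
      · exact (integrableOn_const hBfin.ne).integrable
      · intro j
        apply Eventually.of_forall
        intro t
        simp [Complex.norm_exp]
      · rw [ae_restrict_iff' hBmeas]
        exact Eventually.of_forall fun t ht => hDconv t ht.1
    rw [integral_const] at hDCT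
    -- Riemann-Lebesgue
    have hRL : Tendsto (fun j => ∫ t in B, Complex.exp (-(Complex.I * ((t * d j : ℝ) : ℂ))))
        atTop (𝓝 0) := by
      have h2 : ∀ j, (∫ t in B, Complex.exp (-(Complex.I * ((t * d j : ℝ) : ℂ))))
          = 𝓕 (B.indicator (fun _ => (1 : ℂ))) (d j / (2 * π)) := by
        intro j
        rw [Real.fourier_real_eq_integral_exp_smul]
        have : (fun v : ℝ => Complex.exp (((-2 * π * v * (d j / (2 * π)) : ℝ) : ℂ) * Complex.I)
              • B.indicator (fun _ => (1:ℂ)) v)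
            = B.indicator (fun v => Complex.exp (-(Complex.I * ((v * d j : ℝ) : ℂ)))) := by
          funext v
          by_cases hv : v ∈ B
          · rw [Set.indicator_of_mem hv, Set.indicator_of_mem hv, smul_eq_mul, mul_one]
            congr 1
            have harg : (-2 * π * v * (d j / (2 * π)) : ℝ) = -(v * d j) := by
              field_simp
            rw [harg]
            push_cast
            ring
          · rw [Set.indicator_of_notMem hv, Set.indicator_of_notMem hv, smul_zero]
        rw [this, integral_indicator hBmeas]
      simp_rw [h2]
      have hcocompact : Tendsto (fun j => d j / (2 * π)) atTop (cocompact ℝ) := by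
        have h3 : Tendsto (fun j => d j / (2 * π)) atTop atTop :=
          hdtop.atTop_div_const (by positivity)
        rw [cocompact_eq_atBot_atTop]
        exact h3.mono_right le_sup_right
      exact (Real.zero_at_infty_fourier _).comp hcocompact
    have := tendsto_nhds_unique hDCT hRL
    have hreal : (volume B).toReal = 0 := by
      rw [measureReal_restrict_apply_univ] at this
      simpa [measureReal_def] using this
    exact (ENNReal.toReal_eq_zero_iff _).1 hreal |>.resolve_right (ne_of_lt hBfin)
  -- conclude
  have hcover : D ⊆ ⋃ R : ℕ, D ∩ Icc (-(R:ℝ)) R := by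
    intro t ht
    obtain ⟨R, hR⟩ := exists_nat_ge |t|
    exact mem_iUnion.2 ⟨R, ht, by
      rw [mem_Icc]
      constructor <;> [linarith [neg_abs_le t]; linarith [le_abs_self t]]⟩
  exact measure_mono_null hcover (measure_iUnion_null fun R => hB R)


/-- If a subsequence of the partial sums `∑_{n=1}^{m_k} n^{-s}` converges pointwise on a
set `E` of the line `{Re s = 1}` (parametrised as `1 + it`, `t ∈ E`), then the limit
function equals `ζ(s)` at almost every point of `E`. -/
theorem stmt_11 (m : ℕ → ℕ) (hm : StrictMono m) (E : Set ℝ) (S : ℝ → ℂ)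
    (hconv : ∀ t ∈ E,
      Tendsto (fun k => ∑ n ∈ Finset.range (m k), ((n : ℂ) + 1) ^ (-(1 + Complex.I * t)))
        atTop (𝓝 (S t))) :
    ∀ᵐ t : ℝ, t ∈ E → S t = riemannZeta (1 + Complex.I * t) := by
  set x : ℕ → ℝ := fun k => Real.log (m k) with hx
  have hxmono : Monotone x := by
    intro a b hab
    rcases Nat.eq_zero_or_pos (m a) with h | h
    · rw [hx]; dsimp only; rw [h]
      rcases Nat.eq_zero_or_pos (m b) with h' | h'
      · rw [h']
      · simp only [Nat.cast_zero, Real.log_zero]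
        exact Real.log_nonneg (by exact_mod_cast h')
    · exact Real.log_le_log (by exact_mod_cast h) (by exact_mod_cast hm.monotone hab)
  have hxtop : Tendsto x atTop atTop :=
    Real.tendsto_log_atTop.comp (tendsto_natCast_atTop_atTop.comp hm.tendsto_atTop)
  set D := {t : ℝ | ∃ c, Tendsto (fun k => Complex.exp (-(Complex.I * ((t * x k : ℝ) : ℂ))))
      atTop (𝓝 c)} with hD
  have hDnull : (volume : Measure ℝ) D = 0 := aux_null x hxmono hxtop
  -- E ⊆ D ∪ {0}
  have hED : E ⊆ D ∪ {0} := by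
    intro t ht
    rcases eq_or_ne t 0 with rfl | ht0
    · exact Or.inr rfl
    left
    set s : ℂ := Complex.I * (t : ℂ) with hsdef
    have hs : s ≠ 0 := by
      rw [hsdef]
      simp [Complex.ext_iff, ht0]
    have hre : s.re = 0 := by rw [hsdef]; simp
    obtain ⟨B, hB⟩ := aux_em s hs hre
    have hmk : Tendsto (fun k => (∑ n ∈ Finset.range (m k), ((n : ℂ) + 1) ^ (-(1 + s)))
        - (((m k : ℝ) : ℂ) ^ (-s)) / (-s)) atTop (𝓝 B) := hB.comp hm.tendsto_atTop
    have hSt := hconv t ht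
    -- cpow part converges
    have hcpow : Tendsto (fun k => (((m k : ℝ) : ℂ) ^ (-s))) atTop
        (𝓝 ((S t - B) * (-s))) := by
      have h1 := hSt.sub hmk
      have h2 : (fun k => (∑ n ∈ Finset.range (m k), ((n : ℂ) + 1) ^ (-(1 + s)))
            - ((∑ n ∈ Finset.range (m k), ((n : ℂ) + 1) ^ (-(1 + s)))
              - (((m k : ℝ) : ℂ) ^ (-s)) / (-s)))
          = fun k => (((m k : ℝ) : ℂ) ^ (-s)) / (-s) := by
        funext k; ring
      rw [h2] at h1
      have h3 := h1.mul_const (-s)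
      have h4 : (fun k => (((m k : ℝ) : ℂ) ^ (-s)) / (-s) * (-s))
          = fun k => (((m k : ℝ) : ℂ) ^ (-s)) := by
        funext k
        field_simp
      rwa [h4] at h3
    refine ⟨(S t - B) * (-s), ?_⟩
    apply hcpow.congr'
    filter_upwards [eventually_ge_atTop 1] with k hk
    have hmk1 : 1 ≤ m k := le_trans hk (hm.le_apply)
    have hmk0 : ((m k : ℝ) : ℂ) ≠ 0 := by
      simp only [ne_eq, Complex.ofReal_eq_zero, Nat.cast_eq_zero]
      omega
    rw [Complex.cpow_def_of_ne_zero hmk0]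
    congr 1
    rw [← Complex.ofReal_log (by positivity : (0:ℝ) ≤ (m k : ℝ))]
    rw [hsdef, hx]
    push_cast
    ring
  have hE0 : (volume : Measure ℝ) E = 0 :=
    measure_mono_null hED (measure_union_null hDnull (measure_singleton 0))
  rw [ae_iff]
  apply measure_mono_null _ hE0
  intro t ht
  simp only [mem_setOf_eq, Classical.not_imp] at ht
  exact ht.1
end
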